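/- If U is an ultrafilter on ω, V is a filter on ω, and Φ : ⊆ ω^ω → ω is a partial continuous function witnessing U ≤°_LT V, then for every A ⊆ ω: A ∈ U if and only if there exists a V-branching tree T with [T] ⊆ dom(Φ) and Φ[[T]] ⊆ A. In particular, no two distinct ultrafilters can share the same witnessing pair (V, Φ). Key step: if T and T' are both V-branching trees with V a filter, then [T] ∩ [T'] ≠ ∅. -/

import Mathlib

/-- A filter on ω. -/
def IsFilterFam (F : Set (Set ℕ)) : Prop :=
  F.Nonempty ∧ (∀ A B : Set ℕ, A ∈ F → A ⊆ B → B ∈ F) ∧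
    (∀ A B : Set ℕ, A ∈ F → B ∈ F → A ∩ B ∈ F) ∧ ∅ ∉ F

/-- An ultrafilter on ω. -/
def IsUltraFam (F : Set (Set ℕ)) : Prop :=
  IsFilterFam F ∧ ∀ A : Set ℕ, A ∈ F ∨ Aᶜ ∈ F

/-- A tree: contains the empty string and is closed under prefixes. -/
def IsTree (T : Set (List ℕ)) : Prop :=
  [] ∈ T ∧ ∀ σ τ : List ℕ, σ <+: τ → τ ∈ T → σ ∈ T

/-- The length-`n` initial segment of an infinite string `p`. -/
def seg (p : ℕ → ℕ) (n : ℕ) : List ℕ := List.ofFn fun i : Fin n => p i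

/-- A `V`-branching tree: a nonempty tree all of whose nodes have `V`-large
successor sets. -/
def IsBranching (V : Set (Set ℕ)) (T : Set (List ℕ)) : Prop :=
  IsTree T ∧ ∀ σ ∈ T, {n | σ ++ [n] ∈ T} ∈ V

lemma seg_succ (p : ℕ → ℕ) (n : ℕ) : seg p (n+1) = seg p n ++ [p n] := by
  rw [seg, seg, List.ofFn_succ']
  simp [List.concat_eq_append]

lemma seg_prefix (p : ℕ → ℕ) {n m : ℕ} (h : n ≤ m) : seg p n <+: seg p m := by
  induction m with
  | zero => simp_all [seg]
  | succ m ih =>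
    rcases Nat.lt_or_ge n (m+1) with h' | h'
    · exact (ih (Nat.lt_succ_iff.mp h')).trans (by rw [seg_succ]; exact ⟨[p m], rfl⟩)
    · have : n = m + 1 := le_antisymm h h'
      subst this; exact List.prefix_rfl

lemma common_path (V : Set (Set ℕ)) (hV : IsFilterFam V)
    (T T' : Set (List ℕ)) (hT : IsBranching V T) (hT' : IsBranching V T') :
    ∃ p : ℕ → ℕ, (∀ n, seg p n ∈ T) ∧ (∀ n, seg p n ∈ T') := by
  obtain ⟨-, hup, hint, hne⟩ := hV
  have step : ∀ σ, σ ∈ T → σ ∈ T' → ∃ k, σ ++ [k] ∈ T ∧ σ ++ [k] ∈ T' := by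
    intro σ h1 h2
    have : ({n | σ ++ [n] ∈ T} ∩ {n | σ ++ [n] ∈ T'}) ∈ V :=
      hint _ _ (hT.2 σ h1) (hT'.2 σ h2)
    have hnonempty : ({n | σ ++ [n] ∈ T} ∩ {n | σ ++ [n] ∈ T'}).Nonempty := by
      by_contra h
      rw [Set.not_nonempty_iff_eq_empty] at h
      exact hne (h ▸ this)
    obtain ⟨k, hk1, hk2⟩ := hnonempty
    exact ⟨k, hk1, hk2⟩
  classical
  -- define g : ℕ → List ℕ recursively
  let ext : List ℕ → ℕ := fun σ =>
    if h : σ ∈ T ∧ σ ∈ T' then (step σ h.1 h.2).choose else 0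
  let g : ℕ → List ℕ := fun n => Nat.rec [] (fun _ σ => σ ++ [ext σ]) n
  have hg : ∀ n, g n ∈ T ∧ g n ∈ T' := by
    intro n
    induction n with
    | zero => exact ⟨hT.1.1, hT'.1.1⟩
    | succ n ih =>
      show g n ++ [ext (g n)] ∈ T ∧ g n ++ [ext (g n)] ∈ T'
      have : ext (g n) = (step (g n) ih.1 ih.2).choose := by
        simp only [ext, dif_pos ih]
      rw [this]
      exact (step (g n) ih.1 ih.2).choose_spec
  have hseg : ∀ n, seg (fun n => ext (g n)) n = g n := by
    intro n
    induction n with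
    | zero => rfl
    | succ n ih => rw [seg_succ, ih]
  refine ⟨fun n => ext (g n), ?_, ?_⟩
  · intro n; rw [hseg]; exact (hg n).1
  · intro n; rw [hseg]; exact (hg n).2

/-- `φ` (the finite representative, with antichain domain, of a partial continuous
function `Φ : ⊆ ω^ω → ω`) witnesses `U ≤°_LT V`: for every `A ∈ U` there is a
`V`-branching tree `T` with `[T] ⊆ dom Φ` and `Φ[[T]] ⊆ A`. -/
def Witnesses (V : Set (Set ℕ)) (φ : List ℕ → Option ℕ) (U : Set (Set ℕ)) : Prop :=
  ∀ A ∈ U, ∃ T : Set (List ℕ), IsBranching V T ∧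
    ∀ p : ℕ → ℕ, (∀ n, seg p n ∈ T) → ∃ n c, φ (seg p n) = some c ∧ c ∈ A

/-- If `U` is an ultrafilter, `V` a filter, and `Φ` (with finite representative `φ`
having antichain domain) witnesses `U ≤°_LT V`, then for every `A ⊆ ω`:
`A ∈ U` iff there is a `V`-branching tree `T` with `[T] ⊆ dom Φ` and `Φ[[T]] ⊆ A`.
In particular no two distinct ultrafilters share the same witnessing pair `(V, Φ)`.
Key step: any two `V`-branching trees share a common infinite path. -/
theorem stmt12 (U V : Set (Set ℕ)) (hU : IsUltraFam U) (hV : IsFilterFam V)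
    (φ : List ℕ → Option ℕ)
    (hAnti : ∀ σ τ : List ℕ, (φ σ).isSome → (φ τ).isSome → σ <+: τ → σ = τ)
    (hwit : Witnesses V φ U) :
    (∀ A : Set ℕ, A ∈ U ↔ ∃ T : Set (List ℕ), IsBranching V T ∧
        ∀ p : ℕ → ℕ, (∀ n, seg p n ∈ T) → ∃ n c, φ (seg p n) = some c ∧ c ∈ A) ∧
    (∀ U' : Set (Set ℕ), IsUltraFam U' → Witnesses V φ U' → U' = U) ∧
    (∀ T T' : Set (List ℕ), IsBranching V T → IsBranching V T' →
        ∃ p : ℕ → ℕ, (∀ n, seg p n ∈ T) ∧ (∀ n, seg p n ∈ T')) := by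
  have key := common_path V hV
  have main : ∀ W : Set (Set ℕ), IsUltraFam W → Witnesses V φ W →
      ∀ A : Set ℕ, A ∈ W ↔ ∃ T : Set (List ℕ), IsBranching V T ∧
        ∀ p : ℕ → ℕ, (∀ n, seg p n ∈ T) → ∃ n c, φ (seg p n) = some c ∧ c ∈ A := by
    intro W hW hw A
    constructor
    · exact hw A
    · rintro ⟨T, hT, hTA⟩
      rcases hW.2 A with h | h
      · exact h
      · exfalso
        obtain ⟨T', hT', hTA'⟩ := hw Aᶜ h
        obtain ⟨p, hp, hp'⟩ := key T T' hT hT'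
        obtain ⟨n, c, hc, hcA⟩ := hTA p hp
        obtain ⟨m, c', hc', hcA'⟩ := hTA' p hp'
        have heq : seg p n = seg p m := by
          rcases le_total n m with h' | h'
          · exact hAnti _ _ (by simp [hc]) (by simp [hc']) (seg_prefix p h')
          · exact (hAnti _ _ (by simp [hc']) (by simp [hc]) (seg_prefix p h')).symm
        rw [heq, hc'] at hc
        exact hcA' (Option.some.inj hc ▸ hcA)
  refine ⟨main U hU hwit, fun U' hU' hwit' => ?_, key⟩
  ext A
  exact (main U' hU' hwit' A).trans (main U hU hwit A).symm
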